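/- Under the alternating minimization iteration for F(X₁,C,B,D) = ‖(A₁−X₁)⊙W₁‖_F² + ‖A₂ − X₁C − BD‖_F², the decrease satisfies m_p − m_{p+1} ≥ (1/2)‖B_{p+1}D_{p+1} − B_pD_p‖_F² for all p, where m_p = F((X₁)_p, C_p, B_p, D_p). -/

import Mathlib

open Matrix Filter Topology

noncomputable def frobSq {α β : Type*} [Fintype α] [Fintype β] (A : Matrix α β ℝ) : ℝ :=
  ∑ i, ∑ j, (A i j) ^ 2

noncomputable def frob {α β : Type*} [Fintype α] [Fintype β] (A : Matrix α β ℝ) : ℝ :=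
  Real.sqrt (frobSq A)
noncomputable def Ffun {m k nk rk : ℕ} (A₁ W₁ : Matrix (Fin m) (Fin k) ℝ)
    (A₂ : Matrix (Fin m) (Fin nk) ℝ) (X₁ : Matrix (Fin m) (Fin k) ℝ)
    (C : Matrix (Fin k) (Fin nk) ℝ) (B : Matrix (Fin m) (Fin rk) ℝ)
    (D : Matrix (Fin rk) (Fin nk) ℝ) : ℝ :=
  frobSq (Matrix.hadamard (A₁ - X₁) W₁) + frobSq (A₂ - X₁ * C - B * D)

noncomputable def fip {α β : Type*} [Fintype α] [Fintype β] (A B : Matrix α β ℝ) : ℝ :=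
  ∑ i, ∑ j, A i j * B i j

lemma frobSq_nonneg {α β : Type*} [Fintype α] [Fintype β] (A : Matrix α β ℝ) : 0 ≤ frobSq A :=
  Finset.sum_nonneg fun _ _ => Finset.sum_nonneg fun _ _ => sq_nonneg _

lemma frobSq_sub_smul {α β : Type*} [Fintype α] [Fintype β] (N P : Matrix α β ℝ) (t : ℝ) :
    frobSq (N - t • P) = frobSq N - 2 * t * fip N P + t ^ 2 * frobSq P := by
  simp only [frobSq, fip, Matrix.sub_apply, Matrix.smul_apply, smul_eq_mul,
    Finset.mul_sum, ← Finset.sum_add_distrib, ← Finset.sum_sub_distrib]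
  refine Finset.sum_congr rfl fun i _ => Finset.sum_congr rfl fun j _ => by ring

lemma quad_coeff_zero (b c : ℝ) (hc : 0 ≤ c) (h : ∀ t : ℝ, 0 ≤ b * t + c * t ^ 2) : b = 0 := by
  have h1 := h (-b / (2 * (c + 1)))
  have h2 : (0:ℝ) < c + 1 := by linarith
  by_contra hb
  have ht : b * (-b / (2 * (c + 1))) + c * (-b / (2 * (c + 1))) ^ 2
      = -(b ^ 2 * (c + 2)) / (4 * (c + 1) ^ 2) := by
    field_simp
    ring
  rw [ht] at h1
  have hd : (0:ℝ) < 4 * (c + 1) ^ 2 := by positivity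
  have hb2 : 0 < b ^ 2 := by positivity
  rw [le_div_iff₀ hd] at h1
  nlinarith

lemma proj_pyth {α β : Type*} [Fintype α] [Fintype β] (N P : Matrix α β ℝ)
    (h : ∀ t : ℝ, frobSq N ≤ frobSq (N - t • P)) :
    frobSq (N - P) = frobSq N + frobSq P := by
  have hz : -2 * fip N P = 0 := by
    apply quad_coeff_zero _ _ (frobSq_nonneg P)
    intro t
    have := h t
    rw [frobSq_sub_smul] at this
    nlinarith
  have h1 := frobSq_sub_smul N P 1
  rw [one_smul] at h1
  nlinarith

lemma frobSq_neg {α β : Type*} [Fintype α] [Fintype β] (A : Matrix α β ℝ) :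
    frobSq (-A) = frobSq A := by
  simp [frobSq]

lemma frobSq_add_le {α β : Type*} [Fintype α] [Fintype β] (U V : Matrix α β ℝ) :
    frobSq (U + V) ≤ 2 * frobSq U + 2 * frobSq V := by
  simp only [frobSq, Matrix.add_apply, Finset.mul_sum, ← Finset.sum_add_distrib]
  refine Finset.sum_le_sum fun i _ => Finset.sum_le_sum fun j _ => by nlinarith [sq_nonneg (U i j - V i j)]

/-- Decrease bound: m_p − m_{p+1} ≥ (1/2)‖B_{p+1}D_{p+1} − B_pD_p‖_F². -/
theorem stmt8 {m k nk rk : ℕ}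
    (A₁ W₁ : Matrix (Fin m) (Fin k) ℝ) (A₂ : Matrix (Fin m) (Fin nk) ℝ)
    (hW : ∀ i j, 0 < W₁ i j)
    (X : ℕ → Matrix (Fin m) (Fin k) ℝ) (C : ℕ → Matrix (Fin k) (Fin nk) ℝ)
    (B : ℕ → Matrix (Fin m) (Fin rk) ℝ) (D : ℕ → Matrix (Fin rk) (Fin nk) ℝ)
    (hX : ∀ p (Y : Matrix (Fin m) (Fin k) ℝ),
      Ffun A₁ W₁ A₂ (X (p + 1)) (C p) (B p) (D p) ≤ Ffun A₁ W₁ A₂ Y (C p) (B p) (D p))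
    (hC : ∀ p (Y : Matrix (Fin k) (Fin nk) ℝ),
      Ffun A₁ W₁ A₂ (X (p + 1)) (C (p + 1)) (B p) (D p) ≤
        Ffun A₁ W₁ A₂ (X (p + 1)) Y (B p) (D p))
    (hB : ∀ p (Y : Matrix (Fin m) (Fin rk) ℝ),
      Ffun A₁ W₁ A₂ (X (p + 1)) (C (p + 1)) (B (p + 1)) (D p) ≤
        Ffun A₁ W₁ A₂ (X (p + 1)) (C (p + 1)) Y (D p))
    (hD : ∀ p (Y : Matrix (Fin rk) (Fin nk) ℝ),
      Ffun A₁ W₁ A₂ (X (p + 1)) (C (p + 1)) (B (p + 1)) (D (p + 1)) ≤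
        Ffun A₁ W₁ A₂ (X (p + 1)) (C (p + 1)) (B (p + 1)) Y) :
    ∀ p : ℕ,
      (1 / 2) * frobSq (B (p + 1) * D (p + 1) - B p * D p) ≤
        Ffun A₁ W₁ A₂ (X p) (C p) (B p) (D p) -
          Ffun A₁ W₁ A₂ (X (p + 1)) (C (p + 1)) (B (p + 1)) (D (p + 1)) := by
  intro p
  set X' := X (p + 1)
  set C' := C (p + 1)
  set B' := B (p + 1)
  set D' := D (p + 1)
  set M : Matrix (Fin m) (Fin nk) ℝ := A₂ - X' * C' with hM
  -- residual minimization facts extracted from hB, hD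
  have keyB : ∀ Y, frobSq (M - B' * D p) ≤ frobSq (M - Y * D p) := by
    intro Y
    have := hB p Y
    simp [Ffun, hM, sub_sub] at this ⊢; exact this
  have keyD : ∀ Y, frobSq (M - B' * D') ≤ frobSq (M - B' * Y) := by
    intro Y
    have := hD p Y
    simp [Ffun, hM, sub_sub] at this ⊢; exact this
  -- Pythagoras for the B step
  have pB : frobSq (M - B p * D p)
      = frobSq (M - B' * D p) + frobSq ((B p - B') * D p) := by
    have e1 : M - B' * D p - (B p - B') * D p = M - B p * D p := by
      rw [Matrix.sub_mul]; abel
    have h := proj_pyth (M - B' * D p) ((B p - B') * D p) (fun t => by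
      have e2 : M - B' * D p - t • ((B p - B') * D p)
          = M - (B' + t • (B p - B')) * D p := by
        rw [Matrix.add_mul, Matrix.smul_mul]; abel
      rw [e2]; exact keyB _)
    rw [e1] at h; exact h
  -- Pythagoras for the D step
  have pD : frobSq (M - B' * D p)
      = frobSq (M - B' * D') + frobSq (B' * (D p - D')) := by
    have e1 : M - B' * D' - B' * (D p - D') = M - B' * D p := by
      rw [Matrix.mul_sub]; abel
    have h := proj_pyth (M - B' * D') (B' * (D p - D')) (fun t => by
      have e2 : M - B' * D' - t • (B' * (D p - D'))
          = M - B' * (D' + t • (D p - D')) := by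
        rw [Matrix.mul_add, Matrix.mul_smul]; abel
      rw [e2]; exact keyD _)
    rw [e1] at h; exact h
  -- monotone steps for X and C
  have s1 : Ffun A₁ W₁ A₂ X' (C p) (B p) (D p) ≤ Ffun A₁ W₁ A₂ (X p) (C p) (B p) (D p) :=
    hX p (X p)
  have s2 : Ffun A₁ W₁ A₂ X' C' (B p) (D p) ≤ Ffun A₁ W₁ A₂ X' (C p) (B p) (D p) :=
    hC p (C p)
  -- rewrite the two Ffun values sharing the common first term
  have e3 : Ffun A₁ W₁ A₂ X' C' (B p) (D p)
      = frobSq (Matrix.hadamard (A₁ - X') W₁) + frobSq (M - B p * D p) := by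
    simp [Ffun, hM, sub_sub]
  have e4 : Ffun A₁ W₁ A₂ X' C' B' D'
      = frobSq (Matrix.hadamard (A₁ - X') W₁) + frobSq (M - B' * D') := by
    simp [Ffun, hM, sub_sub]
  -- parallelogram bound
  have e5 : B' * D' - B p * D p = -((B p - B') * D p + B' * (D p - D')) := by
    rw [Matrix.sub_mul, Matrix.mul_sub]; abel
  have par : frobSq (B' * D' - B p * D p)
      ≤ 2 * frobSq ((B p - B') * D p) + 2 * frobSq (B' * (D p - D')) := by
    rw [e5, frobSq_neg]
    exact frobSq_add_le _ _
  linarith
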